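/- arXiv:1610.07726 — 2 statements merged into one kernel-verified Lean document; each statement's English description precedes it below -/
import Mathlib

section
/- With the value-based optimal dual penalty M*(α,z) = Σ_{n=0}^{N-1} (V_{n+1}(x_{n+1}) − E[V_{n+1}(x_{n+1})|x_n, a_n]), the pathwise inner optimization recovers the optimal value almost surely: sup over all action sequences of {Σ_{n=0}^{N-1} r_n(x_n, a_n) + r_N(x_N) − M*(a, z)} = V₀(x₀) almost surely (strong duality holds pathwise, not just in expectation). -/
open MeasureTheory

/-- State trajectory under an action sequence `a` and noise realization `z`:
`x_0 = x0`, `x_{n+1} = f x_n a_n z_{n+1}`. -/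
noncomputable def traj {X A Ξ : Type*} {N : ℕ} (f : X → A → Ξ → X) (x0 : X)
    (a : Fin N → A) (z : Fin N → Ξ) : ℕ → X :=
  fun n => Nat.rec x0 (fun k xk => if h : k < N then f xk (a ⟨k, h⟩) (z ⟨k, h⟩) else xk) n

/-- State trajectory under a non-anticipative (Markov) policy `α`. -/
noncomputable def ptraj {X A Ξ : Type*} {N : ℕ} (f : X → A → Ξ → X) (x0 : X)
    (α : ℕ → X → A) (z : Fin N → Ξ) : ℕ → X :=
  fun n => Nat.rec x0 (fun k xk => if h : k < N then f xk (α k xk) (z ⟨k, h⟩) else xk) n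

/-- Action sequence induced by a non-anticipative policy along its own trajectory. -/
noncomputable def pact {X A Ξ : Type*} {N : ℕ} (f : X → A → Ξ → X) (x0 : X)
    (α : ℕ → X → A) (z : Fin N → Ξ) : Fin N → A :=
  fun n => α n (ptraj f x0 α z n)

/-- Total reward of an action sequence along the noise path `z`. -/
noncomputable def totalReward {X A Ξ : Type*} {N : ℕ} (f : X → A → Ξ → X) (x0 : X)
    (r : ℕ → X → A → ℝ) (rN : X → ℝ) (a : Fin N → A) (z : Fin N → Ξ) : ℝ :=
  (∑ n : Fin N, r n (traj f x0 a z n) (a n)) + rN (traj f x0 a z N)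

/-- **Pathwise strong duality.** With the value-based optimal dual penalty
`M*(a,z) = Σₙ (V_{n+1}(x_{n+1}) − E[V_{n+1}(x_{n+1})|xₙ,aₙ])`, the pathwise inner
optimization recovers the optimal value almost surely:
`sup_a {total reward − M*(a,z)} = V₀(x₀)` a.s. -/
theorem pathwise_strong_duality {X A Ξ : Type*} [MeasurableSpace Ξ] [Nonempty A] {N : ℕ}
    (f : X → A → Ξ → X) (x0 : X) (r : ℕ → X → A → ℝ) (rN : X → ℝ)
    (ρ : Measure Ξ) [IsProbabilityMeasure ρ]
    (P : Measure (Fin N → Ξ)) (hP : P = Measure.pi fun _ => ρ)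
    (V : ℕ → X → ℝ)
    -- Bellman recursion with attained suprema
    (hVN : ∀ x, V N x = rN x)
    (hBellmanLE : ∀ n < N, ∀ (x : X) (a : A),
      r n x a + ∫ ζ, V (n + 1) (f x a ζ) ∂ρ ≤ V n x)
    (hBellmanAtt : ∀ n < N, ∀ x : X, ∃ a : A,
      V n x = r n x a + ∫ ζ, V (n + 1) (f x a ζ) ∂ρ)
    (hVint : ∀ n < N, ∀ (x : X) (a : A), Integrable (fun ζ => V (n + 1) (f x a ζ)) ρ) :
    ∀ᵐ z ∂P,
      (⨆ a : Fin N → A,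
        (totalReward f x0 r rN a z -
          ∑ n : Fin N,
            (V (n + 1) (traj f x0 a z (n + 1)) -
              ∫ ζ, V (n + 1) (f (traj f x0 a z n) (a n) ζ) ∂ρ)))
        = V 0 x0 := by
  refine Filter.Eventually.of_forall fun z => ?_
  classical
  choose act hact using hBellmanAtt
  set α : ℕ → X → A := fun n x => if h : n < N then act n h x else Classical.arbitrary A with hα
  set g : (Fin N → A) → ℝ := fun a =>
    totalReward f x0 r rN a z -
      ∑ n : Fin N,
        (V (n + 1) (traj f x0 a z (n + 1)) -
          ∫ ζ, V (n + 1) (f (traj f x0 a z n) (a n) ζ) ∂ρ) with hg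
  -- key algebraic identity via telescoping
  have key : ∀ a : Fin N → A,
      g a = (∑ n : Fin N, (r n (traj f x0 a z n) (a n)
              + (∫ ζ, V (n + 1) (f (traj f x0 a z n) (a n) ζ) ∂ρ)
              - V n (traj f x0 a z n))) + V 0 x0 := by
    intro a
    set T : ℕ → X := traj f x0 a z with hT
    have tel : ∑ n ∈ Finset.range N, (V n (T n) - V (n + 1) (T (n + 1)))
        = V 0 (T 0) - V N (T N) := Finset.sum_range_sub' (fun i => V i (T i)) N
    have hT0 : T 0 = x0 := rfl
    have split : ∑ n : Fin N, (r (↑n) (T ↑n) (a n)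
            + (∫ ζ, V (↑n + 1) (f (T ↑n) (a n) ζ) ∂ρ) - V ↑n (T ↑n))
        = (∑ n : Fin N, r (↑n) (T ↑n) (a n))
          - (∑ n : Fin N, (V (↑n + 1) (T (↑n + 1))
              - ∫ ζ, V (↑n + 1) (f (T ↑n) (a n) ζ) ∂ρ))
          - ∑ n : Fin N, (V ↑n (T ↑n) - V (↑n + 1) (T (↑n + 1))) := by
      rw [← Finset.sum_sub_distrib, ← Finset.sum_sub_distrib]
      exact Finset.sum_congr rfl fun n _ => by ring
    have tel' : ∑ n : Fin N, (V ↑n (T ↑n) - V (↑n + 1) (T (↑n + 1)))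
        = V 0 x0 - V N (T N) := by
      rw [Fin.sum_univ_eq_sum_range (fun n => V n (T n) - V (n + 1) (T (n + 1))) N, tel, hT0]
    have hrN : rN (T N) = V N (T N) := (hVN (T N)).symm
    simp only [hg, totalReward, ← hT] at *
    rw [split, tel', hrN]
    ring
  -- every action sequence is dominated by V 0 x0
  have hle : ∀ a : Fin N → A, g a ≤ V 0 x0 := by
    intro a
    rw [key a]
    have : ∑ n : Fin N, (r (↑n) (traj f x0 a z ↑n) (a n)
        + (∫ ζ, V (↑n + 1) (f (traj f x0 a z ↑n) (a n) ζ) ∂ρ)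
        - V ↑n (traj f x0 a z ↑n)) ≤ 0 := by
      apply Finset.sum_nonpos
      intro n _
      have := hBellmanLE n n.isLt (traj f x0 a z n) (a n)
      linarith
    linarith
  -- the policy-induced action sequence attains V 0 x0
  set astar : Fin N → A := pact f x0 α z with hastar
  have htraj : ∀ n : ℕ, traj f x0 astar z n = ptraj f x0 α z n := by
    intro n
    induction n with
    | zero => rfl
    | succ k ih =>
      show (if h : k < N then f (traj f x0 astar z k) (astar ⟨k, h⟩) (z ⟨k, h⟩)
              else traj f x0 astar z k)
          = (if h : k < N then f (ptraj f x0 α z k) (α k (ptraj f x0 α z k)) (z ⟨k, h⟩)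
              else ptraj f x0 α z k)
      by_cases h : k < N
      · simp only [dif_pos h, ih]
        rfl
      · simp only [dif_neg h, ih]
  have hopt : g astar = V 0 x0 := by
    rw [key astar]
    have hzero : ∀ n : Fin N, r (↑n) (traj f x0 astar z ↑n) (astar n)
        + (∫ ζ, V (↑n + 1) (f (traj f x0 astar z ↑n) (astar n) ζ) ∂ρ)
        - V ↑n (traj f x0 astar z ↑n) = 0 := by
      intro n
      have ha : astar n = act n n.isLt (traj f x0 astar z n) := by
        show α ↑n (ptraj f x0 α z ↑n) = _
        rw [← htraj n, hα]
        simp [n.isLt]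
      rw [ha]
      have := hact n n.isLt (traj f x0 astar z n)
      linarith
    rw [Finset.sum_congr rfl fun n _ => hzero n]
    simp
  -- conclude
  have hbdd : BddAbove (Set.range g) := ⟨V 0 x0, by rintro _ ⟨a, rfl⟩; exact hle a⟩
  exact le_antisymm (ciSup_le hle) (hopt ▸ le_ciSup hbdd astar)
end

section
/- For the linear-quadratic control problem with state dynamics x_{n+1} = A_n x_n + B_n a_n + z_{n+1} and quadratic costs, the optimal value function is V_n(x_n) = x_nᵀ K_n x_n + Σ_{i=n}^{N−1} E[z_{i+1}ᵀ K_{i+1} z_{i+1}], where the matrices K_n are given by the Riccati recursion K_N = Q_N and K_n = A_nᵀ(K_{n+1} − K_{n+1}B_n(B_nᵀK_{n+1}B_n + R_n)^{−1}B_nᵀK_{n+1})A_n + Q_n, and the optimal policy is α*_n(x_n) = L_n x_n with L_n = −(B_nᵀK_{n+1}B_n + R_n)^{−1}B_nᵀK_{n+1}A_n. -/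
open MeasureTheory Matrix


-- scalar transpose helper
lemma dp_swap {d m : ℕ} (M : Matrix (Fin d) (Fin m) ℝ) (u : Fin d → ℝ) (v : Fin m → ℝ) :
    u ⬝ᵥ (M *ᵥ v) = (Mᵀ *ᵥ u) ⬝ᵥ v := by
  rw [Matrix.dotProduct_mulVec, Matrix.mulVec_transpose]

-- integrability of coordinates
lemma int_coord {d : ℕ} (μ : Measure (Fin d → ℝ)) [IsProbabilityMeasure μ]
    (hmom : Integrable (fun z : Fin d → ℝ => ‖z‖ ^ 2) μ) (j : Fin d) :
    Integrable (fun z : Fin d → ℝ => z j) μ := by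
  have : Integrable (fun z : Fin d → ℝ => 1 + ‖z‖ ^ 2) μ := (integrable_const 1).add hmom
  refine this.mono' ?_ ?_
  · exact (measurable_pi_apply j).aestronglyMeasurable
  · refine Filter.Eventually.of_forall fun z => ?_
    have h1 : |z j| ≤ ‖z‖ := by
      simpa [Real.norm_eq_abs] using norm_le_pi_norm z j
    have h2 : ‖z‖ ≤ 1 + ‖z‖ ^ 2 := by nlinarith [norm_nonneg z]
    calc ‖z j‖ ≤ ‖z‖ := by simpa [Real.norm_eq_abs] using h1
    _ ≤ 1 + ‖z‖^2 := h2

lemma int_prod {d : ℕ} (μ : Measure (Fin d → ℝ)) [IsProbabilityMeasure μ]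
    (hmom : Integrable (fun z : Fin d → ℝ => ‖z‖ ^ 2) μ) (i j : Fin d) :
    Integrable (fun z : Fin d → ℝ => z i * z j) μ := by
  refine hmom.mono' ?_ ?_
  · exact ((measurable_pi_apply i).mul (measurable_pi_apply j)).aestronglyMeasurable
  · refine Filter.Eventually.of_forall fun z => ?_
    have hi : |z i| ≤ ‖z‖ := by simpa [Real.norm_eq_abs] using norm_le_pi_norm z i
    have hj : |z j| ≤ ‖z‖ := by simpa [Real.norm_eq_abs] using norm_le_pi_norm z j
    have : ‖z i * z j‖ = |z i| * |z j| := by simp [abs_mul]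
    rw [this]
    calc |z i| * |z j| ≤ ‖z‖ * ‖z‖ := by
          exact mul_le_mul hi hj (abs_nonneg _) (norm_nonneg _)
    _ = ‖z‖ ^ 2 := by ring

lemma int_quad {d : ℕ} (μ : Measure (Fin d → ℝ)) [IsProbabilityMeasure μ]
    (hmom : Integrable (fun z : Fin d → ℝ => ‖z‖ ^ 2) μ) (K : Matrix (Fin d) (Fin d) ℝ) :
    Integrable (fun z : Fin d → ℝ => z ⬝ᵥ (K *ᵥ z)) μ := by
  have : (fun z : Fin d → ℝ => z ⬝ᵥ (K *ᵥ z))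
      = fun z => ∑ i : Fin d, ∑ j : Fin d, K i j * (z i * z j) := by
    funext z
    simp [dotProduct, Matrix.mulVec, Finset.mul_sum]
    ring_nf
    congr 1; funext i; congr 1; funext j; ring
  rw [this]
  apply integrable_finset_sum
  intro i _
  apply integrable_finset_sum
  intro j _
  exact (int_prod μ hmom i j).const_mul _

lemma int_lin {d : ℕ} (μ : Measure (Fin d → ℝ)) [IsProbabilityMeasure μ]
    (hmean : ∀ j : Fin d, ∫ z, z j ∂μ = 0)
    (hmom : Integrable (fun z : Fin d → ℝ => ‖z‖ ^ 2) μ) (c : Fin d → ℝ) :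
    Integrable (fun z : Fin d → ℝ => c ⬝ᵥ z) μ ∧ ∫ z, c ⬝ᵥ z ∂μ = 0 := by
  have hint : ∀ j : Fin d, Integrable (fun z : Fin d → ℝ => c j * z j) μ :=
    fun j => (int_coord μ hmom j).const_mul _
  constructor
  · have : (fun z : Fin d → ℝ => c ⬝ᵥ z) = fun z => ∑ j : Fin d, c j * z j := by
      funext z; simp [dotProduct]
    rw [this]; exact integrable_finset_sum _ fun j _ => hint j
  · have : (fun z : Fin d → ℝ => c ⬝ᵥ z) = fun z => ∑ j : Fin d, c j * z j := by
      funext z; simp [dotProduct]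
    rw [this, integral_finset_sum _ fun j _ => hint j]
    simp [integral_const_mul, hmean]

lemma int_shift_quad {d : ℕ} (μ : Measure (Fin d → ℝ)) [IsProbabilityMeasure μ]
    (hmean : ∀ j : Fin d, ∫ z, z j ∂μ = 0)
    (hmom : Integrable (fun z : Fin d → ℝ => ‖z‖ ^ 2) μ)
    (K : Matrix (Fin d) (Fin d) ℝ) (w : Fin d → ℝ) :
    ∫ z, (w + z) ⬝ᵥ (K *ᵥ (w + z)) ∂μ
      = w ⬝ᵥ (K *ᵥ w) + ∫ z, z ⬝ᵥ (K *ᵥ z) ∂μ := by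
  have hexp : ∀ z : Fin d → ℝ, (w + z) ⬝ᵥ (K *ᵥ (w + z))
      = w ⬝ᵥ (K *ᵥ w) + (Kᵀ *ᵥ w + K *ᵥ w) ⬝ᵥ z + z ⬝ᵥ (K *ᵥ z) := by
    intro z
    rw [Matrix.mulVec_add, dotProduct_add, add_dotProduct,
      add_dotProduct, add_dotProduct]
    have h1 : w ⬝ᵥ (K *ᵥ z) = (Kᵀ *ᵥ w) ⬝ᵥ z := dp_swap K w z
    have h2 : z ⬝ᵥ (K *ᵥ w) = (K *ᵥ w) ⬝ᵥ z := dotProduct_comm _ _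
    rw [h1, h2]; ring
  simp_rw [hexp]
  have h1 : Integrable (fun z : Fin d → ℝ => w ⬝ᵥ (K *ᵥ w) + (Kᵀ *ᵥ w + K *ᵥ w) ⬝ᵥ z) μ :=
    (integrable_const _).add (int_lin μ hmean hmom _).1
  have h2 : Integrable (fun z : Fin d → ℝ => w ⬝ᵥ (K *ᵥ w)) μ := integrable_const _
  rw [integral_add h1 (int_quad μ hmom K),
    integral_add h2 (int_lin μ hmean hmom _).1,
    integral_const, (int_lin μ hmean hmom _).2]
  simp

lemma complete_square {d m : ℕ} (A : Matrix (Fin d) (Fin d) ℝ) (B : Matrix (Fin d) (Fin m) ℝ)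
    (R : Matrix (Fin m) (Fin m) ℝ) (K : Matrix (Fin d) (Fin d) ℝ)
    (hKsym : Kᵀ = K)
    (hSsym : (Bᵀ * K * B + R)ᵀ = Bᵀ * K * B + R)
    (hSu : (Bᵀ * K * B + R) * (Bᵀ * K * B + R)⁻¹ = 1)
    (x : Fin d → ℝ) (a : Fin m → ℝ) :
    a ⬝ᵥ (R *ᵥ a) + (A *ᵥ x + B *ᵥ a) ⬝ᵥ (K *ᵥ (A *ᵥ x + B *ᵥ a))
      = (a + ((Bᵀ * K * B + R)⁻¹ * (Bᵀ * K * A)) *ᵥ x) ⬝ᵥ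
          ((Bᵀ * K * B + R) *ᵥ (a + ((Bᵀ * K * B + R)⁻¹ * (Bᵀ * K * A)) *ᵥ x))
        + x ⬝ᵥ ((Aᵀ * (K - K * B * (Bᵀ * K * B + R)⁻¹ * Bᵀ * K) * A) *ᵥ x) := by
  set S := Bᵀ * K * B + R with hSdef
  set G := Bᵀ * K * A with hGdef
  set y := (S⁻¹ * G) *ᵥ x with hy
  have hSinvsym : (S⁻¹)ᵀ = S⁻¹ := by
    rw [Matrix.transpose_nonsing_inv, hSsym]
  have f1 : S *ᵥ y = G *ᵥ x := by
    rw [hy, Matrix.mulVec_mulVec, ← Matrix.mul_assoc, hSu, Matrix.one_mul]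
  have swapB : ∀ (u : Fin m → ℝ) (v : Fin d → ℝ), u ⬝ᵥ (Bᵀ *ᵥ v) = (B *ᵥ u) ⬝ᵥ v := by
    intro u v
    rw [dp_swap Bᵀ u v, Matrix.transpose_transpose]
  have e1 : (A *ᵥ x) ⬝ᵥ (K *ᵥ (B *ᵥ a)) = (B *ᵥ a) ⬝ᵥ (K *ᵥ (A *ᵥ x)) := by
    rw [dp_swap K, hKsym, dotProduct_comm]
  have e2 : a ⬝ᵥ (S *ᵥ a) = a ⬝ᵥ (R *ᵥ a) + (B *ᵥ a) ⬝ᵥ (K *ᵥ (B *ᵥ a)) := by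
    rw [hSdef, Matrix.add_mulVec, dotProduct_add]
    have : (Bᵀ * K * B) *ᵥ a = Bᵀ *ᵥ (K *ᵥ (B *ᵥ a)) := by
      simp [Matrix.mulVec_mulVec, Matrix.mul_assoc]
    rw [this, swapB]
    ring
  have e3 : a ⬝ᵥ (S *ᵥ y) = (B *ᵥ a) ⬝ᵥ (K *ᵥ (A *ᵥ x)) := by
    rw [f1, hGdef]
    have : (Bᵀ * K * A) *ᵥ x = Bᵀ *ᵥ (K *ᵥ (A *ᵥ x)) := by
      simp [Matrix.mulVec_mulVec, Matrix.mul_assoc]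
    rw [this, swapB]
  have e4 : y ⬝ᵥ (S *ᵥ a) = (B *ᵥ a) ⬝ᵥ (K *ᵥ (A *ᵥ x)) := by
    rw [dp_swap S y a, hSsym, dotProduct_comm, e3]
  have hAKA : (A *ᵥ x) ⬝ᵥ (K *ᵥ (A *ᵥ x)) = x ⬝ᵥ ((Aᵀ * K * A) *ᵥ x) := by
    have h : (Aᵀ * K * A) *ᵥ x = Aᵀ *ᵥ (K *ᵥ (A *ᵥ x)) := by
      simp [Matrix.mulVec_mulVec, Matrix.mul_assoc]
    rw [h, dp_swap Aᵀ x _, Matrix.transpose_transpose]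
  have hGT : (S⁻¹ * G)ᵀ * G = Aᵀ * (K * B * S⁻¹ * Bᵀ * K) * A := by
    rw [Matrix.transpose_mul, hSinvsym, hGdef, Matrix.transpose_mul, Matrix.transpose_mul,
      hKsym, Matrix.transpose_transpose]
    simp [Matrix.mul_assoc]
  have hyy : y ⬝ᵥ (S *ᵥ y) = x ⬝ᵥ ((Aᵀ * (K * B * S⁻¹ * Bᵀ * K) * A) *ᵥ x) := by
    rw [f1]
    calc y ⬝ᵥ (G *ᵥ x) = (G *ᵥ x) ⬝ᵥ ((S⁻¹ * G) *ᵥ x) := by rw [hy, dotProduct_comm]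
    _ = ((S⁻¹ * G)ᵀ *ᵥ (G *ᵥ x)) ⬝ᵥ x := dp_swap _ _ _
    _ = (((S⁻¹ * G)ᵀ * G) *ᵥ x) ⬝ᵥ x := by rw [Matrix.mulVec_mulVec]
    _ = x ⬝ᵥ (((S⁻¹ * G)ᵀ * G) *ᵥ x) := dotProduct_comm _ _
    _ = x ⬝ᵥ ((Aᵀ * (K * B * S⁻¹ * Bᵀ * K) * A) *ᵥ x) := by rw [hGT]
  have e5 : x ⬝ᵥ ((Aᵀ * (K - K * B * S⁻¹ * Bᵀ * K) * A) *ᵥ x)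
      = (A *ᵥ x) ⬝ᵥ (K *ᵥ (A *ᵥ x)) - y ⬝ᵥ (S *ᵥ y) := by
    rw [Matrix.mul_sub, Matrix.sub_mul, Matrix.sub_mulVec, dotProduct_sub, ← hAKA, hyy]
  simp only [Matrix.mulVec_add, dotProduct_add, add_dotProduct]
  rw [e1, e2, e3, e4, e5]
  ring

lemma int_shift_quad_integrable {d : ℕ} (μ : Measure (Fin d → ℝ)) [IsProbabilityMeasure μ]
    (hmean : ∀ j : Fin d, ∫ z, z j ∂μ = 0)
    (hmom : Integrable (fun z : Fin d → ℝ => ‖z‖ ^ 2) μ)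
    (K : Matrix (Fin d) (Fin d) ℝ) (w : Fin d → ℝ) :
    Integrable (fun z : Fin d → ℝ => (w + z) ⬝ᵥ (K *ᵥ (w + z))) μ := by
  have hexp : ∀ z : Fin d → ℝ, (w + z) ⬝ᵥ (K *ᵥ (w + z))
      = w ⬝ᵥ (K *ᵥ w) + (Kᵀ *ᵥ w + K *ᵥ w) ⬝ᵥ z + z ⬝ᵥ (K *ᵥ z) := by
    intro z
    rw [Matrix.mulVec_add, dotProduct_add, add_dotProduct,
      add_dotProduct, add_dotProduct]
    rw [dp_swap K w z, dotProduct_comm z (K *ᵥ w)]; ring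
  simp_rw [hexp]
  exact ((integrable_const _).add (int_lin μ hmean hmom _).1).add (int_quad μ hmom K)

lemma quad_inf {m : ℕ} {S : Matrix (Fin m) (Fin m) ℝ} (hS : S.PosDef)
    (f : (Fin m → ℝ) → ℝ) (y : Fin m → ℝ) (C : ℝ)
    (h : ∀ a, f a = (a + y) ⬝ᵥ (S *ᵥ (a + y)) + C) :
    (⨅ a, f a) = C ∧ f (-y) = C := by
  have hge : ∀ a, C ≤ f a := by
    intro a
    rw [h a]
    have h0 := hS.posSemidef.dotProduct_mulVec_nonneg (a + y)
    simp only [star_trivial] at h0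
    linarith
  have hfy : f (-y) = C := by rw [h]; simp
  refine ⟨le_antisymm ?_ (le_ciInf hge), hfy⟩
  calc (⨅ a, f a) ≤ f (-y) := ciInf_le ⟨C, fun r hr => by
        obtain ⟨a, ha⟩ := hr; exact ha ▸ hge a⟩ (-y)
  _ = C := hfy

/-- **LQC / Riccati.** For the linear–quadratic control problem with dynamics
`x_{n+1} = Aₙ xₙ + Bₙ aₙ + z_{n+1}` and quadratic costs, the Bellman (minimal-cost) value
functions are `Vₙ(x) = xᵀ Kₙ x + Σ_{i=n}^{N−1} E[z_{i+1}ᵀ K_{i+1} z_{i+1}]` with `Kₙ` given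
by the Riccati recursion, and the infimum in the Bellman recursion is attained by the
linear policy `α*ₙ(x) = Lₙ x` with `Lₙ = −(BₙᵀK_{n+1}Bₙ + Rₙ)⁻¹ BₙᵀK_{n+1}Aₙ`. -/
theorem lqc_riccati {d m N : ℕ}
    (A : ℕ → Matrix (Fin d) (Fin d) ℝ) (B : ℕ → Matrix (Fin d) (Fin m) ℝ)
    (Q : ℕ → Matrix (Fin d) (Fin d) ℝ) (R : ℕ → Matrix (Fin m) (Fin m) ℝ)
    (hQ : ∀ n, (Q n).PosSemidef) (hR : ∀ n, (R n).PosDef)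
    (μ : Measure (Fin d → ℝ)) [IsProbabilityMeasure μ]
    -- zero-mean noise with finite second moment
    (hmean : ∀ j : Fin d, ∫ z, z j ∂μ = 0)
    (hmom : Integrable (fun z : Fin d → ℝ => ‖z‖ ^ 2) μ)
    -- the Riccati recursion
    (K : ℕ → Matrix (Fin d) (Fin d) ℝ)
    (hKN : K N = Q N)
    (hK : ∀ n < N, K n =
      (A n)ᵀ * (K (n + 1) -
        K (n + 1) * B n * ((B n)ᵀ * K (n + 1) * B n + R n)⁻¹ * (B n)ᵀ * K (n + 1)) * A n
        + Q n)
    -- the Bellman recursion for the value functions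
    (V : ℕ → (Fin d → ℝ) → ℝ)
    (hVN : ∀ x, V N x = x ⬝ᵥ (Q N *ᵥ x))
    (hBell : ∀ n < N, ∀ x : Fin d → ℝ,
      V n x = ⨅ a : Fin m → ℝ,
        (x ⬝ᵥ (Q n *ᵥ x) + a ⬝ᵥ (R n *ᵥ a) +
          ∫ z, V (n + 1) (A n *ᵥ x + B n *ᵥ a + z) ∂μ)) :
    (∀ n ≤ N, ∀ x : Fin d → ℝ,
      V n x = x ⬝ᵥ (K n *ᵥ x) +
        ∑ i ∈ Finset.Ico n N, ∫ z, z ⬝ᵥ (K (i + 1) *ᵥ z) ∂μ) ∧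
    (∀ n < N, ∀ x : Fin d → ℝ,
      V n x =
        x ⬝ᵥ (Q n *ᵥ x) +
          ((-(((B n)ᵀ * K (n + 1) * B n + R n)⁻¹ * ((B n)ᵀ * K (n + 1) * A n))) *ᵥ x)
            ⬝ᵥ (R n *ᵥ
              ((-(((B n)ᵀ * K (n + 1) * B n + R n)⁻¹ * ((B n)ᵀ * K (n + 1) * A n))) *ᵥ x)) +
          ∫ z, V (n + 1)
            (A n *ᵥ x +
              B n *ᵥ
                ((-(((B n)ᵀ * K (n + 1) * B n + R n)⁻¹ * ((B n)ᵀ * K (n + 1) * A n))) *ᵥ x) +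
              z) ∂μ) := by
  -- main backward induction
  have main : ∀ k : ℕ, ∀ n : ℕ, n + k = N →
      (K n).PosSemidef ∧
      (∀ x : Fin d → ℝ,
        V n x = x ⬝ᵥ (K n *ᵥ x) +
          ∑ i ∈ Finset.Ico n N, ∫ z, z ⬝ᵥ (K (i + 1) *ᵥ z) ∂μ) ∧
      (n < N → ∀ x : Fin d → ℝ,
        V n x =
          x ⬝ᵥ (Q n *ᵥ x) +
            ((-(((B n)ᵀ * K (n + 1) * B n + R n)⁻¹ * ((B n)ᵀ * K (n + 1) * A n))) *ᵥ x)
              ⬝ᵥ (R n *ᵥ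
                ((-(((B n)ᵀ * K (n + 1) * B n + R n)⁻¹ * ((B n)ᵀ * K (n + 1) * A n))) *ᵥ x)) +
            ∫ z, V (n + 1)
              (A n *ᵥ x +
                B n *ᵥ
                  ((-(((B n)ᵀ * K (n + 1) * B n + R n)⁻¹ * ((B n)ᵀ * K (n + 1) * A n))) *ᵥ x) +
                z) ∂μ) := by
    intro k
    induction k with
    | zero =>
      intro n hn
      have hnN : n = N := by omega
      refine ⟨?_, ?_, fun h => absurd h (by omega)⟩
      · rw [hnN, hKN]; exact hQ N
      · intro x
        rw [hnN, hKN, hVN x]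
        simp
    | succ k ih =>
      intro n hn
      have hnN : n < N := by omega
      obtain ⟨ihPSD, ihV, -⟩ := ih (n + 1) (by omega)
      -- notation
      set K' := K (n + 1) with hK'
      set S := (B n)ᵀ * K' * B n + R n with hSdef
      set G := (B n)ᵀ * K' * A n with hGdef
      have hK'sym : K'ᵀ = K' := by
        rw [← Matrix.conjTranspose_eq_transpose_of_trivial]; exact ihPSD.1
      have hRsym : (R n)ᵀ = R n := by
        rw [← Matrix.conjTranspose_eq_transpose_of_trivial]; exact (hR n).1
      have hSpd : S.PosDef := by
        have h1 : ((B n)ᵀ * K' * B n).PosSemidef := by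
          have := ihPSD.conjTranspose_mul_mul_same (B n)
          rwa [Matrix.conjTranspose_eq_transpose_of_trivial] at this
        exact Matrix.PosDef.posSemidef_add h1 (hR n)
      have hSsym : Sᵀ = S := by
        rw [← Matrix.conjTranspose_eq_transpose_of_trivial]; exact hSpd.1
      have hSu : S * S⁻¹ = 1 := Matrix.mul_nonsing_inv S hSpd.det_pos.ne'.isUnit
      have hcs := complete_square (A n) (B n) (R n) K' hK'sym hSsym hSu
      -- the value of the integral term
      have hint : ∀ w : Fin d → ℝ,
          ∫ z, V (n + 1) (w + z) ∂μ
            = w ⬝ᵥ (K' *ᵥ w) + (∫ z, z ⬝ᵥ (K' *ᵥ z) ∂μ)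
              + ∑ i ∈ Finset.Ico (n + 1) N, ∫ z, z ⬝ᵥ (K (i + 1) *ᵥ z) ∂μ := by
        intro w
        have h1 : (fun z : Fin d → ℝ => V (n + 1) (w + z))
            = fun z => (w + z) ⬝ᵥ (K' *ᵥ (w + z))
              + ∑ i ∈ Finset.Ico (n + 1) N, ∫ z, z ⬝ᵥ (K (i + 1) *ᵥ z) ∂μ := by
          funext z; exact ihV (w + z)
        rw [h1, integral_add (int_shift_quad_integrable μ hmean hmom K' w) (integrable_const _),
          int_shift_quad μ hmean hmom K' w, integral_const]
        simp
      -- the constant term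
      have hC : (∫ z, z ⬝ᵥ (K' *ᵥ z) ∂μ)
            + ∑ i ∈ Finset.Ico (n + 1) N, ∫ z, z ⬝ᵥ (K (i + 1) *ᵥ z) ∂μ
          = ∑ i ∈ Finset.Ico n N, ∫ z, z ⬝ᵥ (K (i + 1) *ᵥ z) ∂μ := by
        rw [Finset.sum_eq_sum_Ico_succ_bot hnN]
      -- the quadratic form identity for the Bellman integrand
      have hform : ∀ x : Fin d → ℝ, ∀ a : Fin m → ℝ,
          x ⬝ᵥ (Q n *ᵥ x) + a ⬝ᵥ (R n *ᵥ a) +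
            ∫ z, V (n + 1) (A n *ᵥ x + B n *ᵥ a + z) ∂μ
          = (a + (S⁻¹ * G) *ᵥ x) ⬝ᵥ (S *ᵥ (a + (S⁻¹ * G) *ᵥ x))
            + (x ⬝ᵥ (K n *ᵥ x) +
                ∑ i ∈ Finset.Ico n N, ∫ z, z ⬝ᵥ (K (i + 1) *ᵥ z) ∂μ) := by
        intro x a
        rw [hint (A n *ᵥ x + B n *ᵥ a)]
        have h2 : a ⬝ᵥ (R n *ᵥ a) +
            (A n *ᵥ x + B n *ᵥ a) ⬝ᵥ (K' *ᵥ (A n *ᵥ x + B n *ᵥ a))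
            = (a + (S⁻¹ * G) *ᵥ x) ⬝ᵥ (S *ᵥ (a + (S⁻¹ * G) *ᵥ x))
              + x ⬝ᵥ (((A n)ᵀ * (K' - K' * B n * S⁻¹ * (B n)ᵀ * K') * A n) *ᵥ x) := hcs x a
        have h3 : x ⬝ᵥ (K n *ᵥ x)
            = x ⬝ᵥ (((A n)ᵀ * (K' - K' * B n * S⁻¹ * (B n)ᵀ * K') * A n) *ᵥ x)
              + x ⬝ᵥ (Q n *ᵥ x) := by
          rw [hK n hnN, Matrix.add_mulVec, dotProduct_add]
        rw [← hC]
        linarith [h2, h3]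
      -- nonnegativity of the quadratic part ⇒ K n PSD
      have hM0 : ∀ x : Fin d → ℝ,
          0 ≤ x ⬝ᵥ (((A n)ᵀ * (K' - K' * B n * S⁻¹ * (B n)ᵀ * K') * A n) *ᵥ x) := by
        intro x
        have h := hcs x (-((S⁻¹ * G) *ᵥ x))
        have h0 : (-((S⁻¹ * G) *ᵥ x) + (S⁻¹ * G) *ᵥ x) = 0 := by simp
        rw [h0] at h
        simp only [Matrix.mulVec_zero, dotProduct_zero, zero_add] at h
        have hRa := (hR n).posSemidef.dotProduct_mulVec_nonneg (-((S⁻¹ * G) *ᵥ x))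
        simp only [star_trivial] at hRa
        have hKq := ihPSD.dotProduct_mulVec_nonneg (A n *ᵥ x + B n *ᵥ (-((S⁻¹ * G) *ᵥ x)))
        simp only [star_trivial] at hKq
        linarith
      have hKnPSD : (K n).PosSemidef := by
        refine Matrix.PosSemidef.of_dotProduct_mulVec_nonneg ?_ ?_
        · have hSinvsym : S⁻¹ᵀ = S⁻¹ := by rw [Matrix.transpose_nonsing_inv, hSsym]
          have hQsym : (Q n)ᵀ = Q n := by
            rw [← Matrix.conjTranspose_eq_transpose_of_trivial]; exact (hQ n).1
          have hsym : ((A n)ᵀ * (K' - K' * B n * S⁻¹ * (B n)ᵀ * K') * A n + Q n)ᵀ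
              = (A n)ᵀ * (K' - K' * B n * S⁻¹ * (B n)ᵀ * K') * A n + Q n := by
            simp only [Matrix.transpose_add, Matrix.transpose_mul, Matrix.transpose_sub,
              Matrix.transpose_transpose, hK'sym, hSinvsym, hQsym, Matrix.mul_assoc]
          rw [hK n hnN]
          show _ᴴ = _
          rw [Matrix.conjTranspose_eq_transpose_of_trivial]
          exact hsym
        · intro x
          simp only [star_trivial]
          rw [hK n hnN, Matrix.add_mulVec, dotProduct_add]
          have hQx := (hQ n).dotProduct_mulVec_nonneg x
          simp only [star_trivial] at hQx
          linarith [hM0 x]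
      -- value function formula at n
      have hVn : ∀ x : Fin d → ℝ,
          V n x = x ⬝ᵥ (K n *ᵥ x) +
            ∑ i ∈ Finset.Ico n N, ∫ z, z ⬝ᵥ (K (i + 1) *ᵥ z) ∂μ := by
        intro x
        rw [hBell n hnN x]
        exact (quad_inf hSpd _ ((S⁻¹ * G) *ᵥ x) _ (hform x)).1
      refine ⟨hKnPSD, hVn, fun _ x => ?_⟩
      have hneg : (-(S⁻¹ * G)) *ᵥ x = -((S⁻¹ * G) *ᵥ x) := Matrix.neg_mulVec _ _
      rw [hVn x, hneg, ← (quad_inf hSpd _ ((S⁻¹ * G) *ᵥ x) _ (hform x)).2]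
  constructor
  · intro n hn x
    exact ((main (N - n) n (by omega)).2.1) x
  · intro n hn x
    exact ((main (N - n) n (by omega)).2.2) hn x
end
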